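/- Suppose a and b are even positive integers and r is a positive integer with ab + 1 = r^2 (so r is odd). Define a+ = gcd(a/2, (r+1)/2), a- = gcd(a/2, (r-1)/2), b+ = gcd(b/2, (r+1)/2), b- = gcd(b/2, (r-1)/2). Then a = 2*a+*a-, b = 2*b+*b-, r = a+*b+ + a-*b-, and a+*b+ - a-*b- = 1. -/
import Mathlib


theorem stmt_13 (a b r : ℕ) (ha : 0 < a) (hb : 0 < b) (hr : 0 < r)
    (hae : 2 ∣ a) (hbe : 2 ∣ b) (h : a*b + 1 = r^2) :
    Nat.gcd (a/2) ((r+1)/2) * Nat.gcd (a/2) ((r-1)/2) * 2 = a ∧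
    Nat.gcd (b/2) ((r+1)/2) * Nat.gcd (b/2) ((r-1)/2) * 2 = b ∧
    Nat.gcd (a/2) ((r+1)/2) * Nat.gcd (b/2) ((r+1)/2) +
      Nat.gcd (a/2) ((r-1)/2) * Nat.gcd (b/2) ((r-1)/2) = r ∧
    Nat.gcd (a/2) ((r+1)/2) * Nat.gcd (b/2) ((r+1)/2) -
      Nat.gcd (a/2) ((r-1)/2) * Nat.gcd (b/2) ((r-1)/2) = 1 := by
  obtain ⟨A, rfl⟩ := hae
  obtain ⟨B, rfl⟩ := hbe
  -- r is odd
  obtain ⟨m, hm⟩ : ∃ m, r = 2*m + 1 := by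
    rcases Nat.even_or_odd r with he | ho
    · exfalso; obtain ⟨k, rfl⟩ := he
      have h1 : (k+k)^2 = 2*(2*(k*k)) := by ring
      have h2 : 2*A*(2*B) = 4*(A*B) := by ring
      omega
    · obtain ⟨k, hk⟩ := ho; exact ⟨k, hk⟩
  subst hm
  have hA : 0 < A := by omega
  have hB : 0 < B := by omega
  have hm0 : 0 < m := by nlinarith [sq_nonneg (2*m+1)]
  have hp2 : (2*m+1+1)/2 = m+1 := by omega
  have hm2 : (2*m+1-1)/2 = m := by omega
  have hA2 : 2*A/2 = A := by omega
  have hB2 : 2*B/2 = B := by omega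
  rw [hp2, hm2, hA2, hB2]
  have hAB : A * B = (m+1) * m := by nlinarith
  have hcop : Nat.Coprime (m+1) m := by simp
  -- Part 1: gcd A (m+1) * gcd A m = A
  have h1 : Nat.gcd A (m+1) * Nat.gcd A m = A :=
    (Nat.gcd_mul_gcd_eq_iff_dvd_mul_of_coprime hcop).mpr ⟨B, hAB.symm⟩
  have h2 : Nat.gcd B (m+1) * Nat.gcd B m = B :=
    (Nat.gcd_mul_gcd_eq_iff_dvd_mul_of_coprime hcop).mpr
      ⟨A, by rw [← hAB]; ring⟩
  set ap := Nat.gcd A (m+1) with hap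
  set am := Nat.gcd A m with ham
  set bp := Nat.gcd B (m+1) with hbp
  set bm := Nat.gcd B m with hbm
  have key : ap * bp * (am * bm) = (m+1) * m := by
    rw [show ap * bp * (am * bm) = (ap * am) * (bp * bm) by ring, h1, h2, hAB]
  -- p coprime to am and bm
  have cam : Nat.Coprime (m+1) am := Nat.Coprime.coprime_dvd_right (Nat.gcd_dvd_right _ _) hcop
  have cbm : Nat.Coprime (m+1) bm := Nat.Coprime.coprime_dvd_right (Nat.gcd_dvd_right _ _) hcop
  have cap : Nat.Coprime m ap := Nat.Coprime.coprime_dvd_right (Nat.gcd_dvd_right _ _) hcop.symm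
  have cbp : Nat.Coprime m bp := Nat.Coprime.coprime_dvd_right (Nat.gcd_dvd_right _ _) hcop.symm
  have hpdvd : (m+1) ∣ ap * bp := by
    have : (m+1) ∣ ap * bp * (am * bm) := ⟨m, key⟩
    exact (Nat.Coprime.dvd_of_dvd_mul_right (cam.mul_right cbm) this)
  have hmdvd : m ∣ am * bm := by
    have : m ∣ ap * bp * (am * bm) := Dvd.intro_left _ (by rw [key])
    exact (Nat.Coprime.dvd_of_dvd_mul_left (cap.mul_right cbp) this)
  obtain ⟨k, hk⟩ := hpdvd
  obtain ⟨l, hl⟩ := hmdvd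
  have hkl : k * l = 1 := by
    have : (m+1) * k * (m * l) = (m+1) * m := by rw [← hk, ← hl, key]
    have h1' : (m+1) * m * (k*l) = (m+1) * m * 1 := by ring_nf; ring_nf at this; linarith
    exact Nat.eq_of_mul_eq_mul_left (by positivity) h1'
  have hk1 : k = 1 := Nat.eq_one_of_mul_eq_one_right hkl
  have hl1 : l = 1 := Nat.eq_one_of_mul_eq_one_left hkl
  have hpp : ap * bp = m + 1 := by rw [hk, hk1, mul_one]
  have hmm : am * bm = m := by rw [hl, hl1, mul_one]
  refine ⟨by rw [h1]; ring, by rw [h2]; ring, by rw [hpp, hmm]; ring, by rw [hpp, hmm]; omega⟩
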